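/- (Lemma 3.1) There exists an absolute constant C > 0, independent of the partition, of the mesh size h, of the interface position α, of γ, and of p, such that for every partition with h ≤ 1 and every p as in the context, (∫_a^α |(Ī_h p − I_h p)'(x)|² dx)^{1/2} ≤ C h (‖p₁''‖_{L²(a,b)} + ‖p₂''‖_{L²(a,b)}), where the derivative is taken on each open subinterval of the partition (excluding the break points). -/

import Mathlib

open Set intervalIntegral

lemma aux_affine_eq (c d c' d' u v t : ℝ) (huv : u ≠ v)
    (h1 : c*u + d = c'*u + d') (h2 : c*v + d = c'*v + d') : c*t + d = c'*t + d' := by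
  have h3 : (c - c') * (v - u) = 0 := by linear_combination h2 - h1
  rcases mul_eq_zero.mp h3 with h | h
  · have hc : c = c' := by linarith
    rw [hc] at h1 ⊢
    have hd : d = d' := by linarith
    rw [hd]
  · exact absurd (by linarith : u = v) huv

lemma aux_exists_elem (x : ℕ → ℝ) : ∀ (k : ℕ), 1 ≤ k → ∀ t : ℝ, x 0 ≤ t → t ≤ x k →
    ∃ i, i < k ∧ x i ≤ t ∧ t ≤ x (i+1) := by
  intro k
  induction k with
  | zero => omega
  | succ m ih =>
    intro _ t h0 hk'
    rcases le_or_gt t (x m) with hm | hm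
    · rcases Nat.eq_zero_or_pos m with rfl | hpos
      · exact ⟨0, by omega, h0, hk'⟩
      · obtain ⟨i, h1, h2, h3⟩ := ih hpos t h0 hm
        exact ⟨i, by omega, h2, h3⟩
    · exact ⟨m, by omega, le_of_lt hm, hk'⟩

lemma aux_smooth (p : ℝ → ℝ) (hp : ContDiff ℝ 2 p) :
    Differentiable ℝ p ∧ Differentiable ℝ (deriv p) ∧ Continuous (deriv (deriv p)) := by
  have h2 : ContDiff ℝ (1 + 1 : ℕ) p := by exact_mod_cast hp
  have h3 := contDiff_succ_iff_deriv.mp (by exact_mod_cast h2 : ContDiff ℝ ((1:ℕ) + 1) p)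
  have h4 := contDiff_succ_iff_deriv.mp (by exact_mod_cast h3.2.2 : ContDiff ℝ ((0:ℕ) + 1) (deriv p))
  exact ⟨h3.1, h4.1, (contDiff_zero.mp (by exact_mod_cast h4.2.2))⟩

set_option maxHeartbeats 2000000 in
lemma aux_cs (u v : ℝ) (f : ℝ → ℝ) (huv : u ≤ v) (hf : Continuous f) :
    (∫ t in u..v, |f t|) ^ 2 ≤ (v - u) * ∫ t in u..v, f t ^ 2 := by
  rcases eq_or_lt_of_le huv with rfl | hlt
  · simp
  · have hMnn : 0 ≤ ∫ t in u..v, |f t| :=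
      intervalIntegral.integral_nonneg (le_of_lt hlt) fun t _ => abs_nonneg _
    have hM2nn : 0 ≤ ∫ t in u..v, f t ^ 2 :=
      intervalIntegral.integral_nonneg (le_of_lt hlt) fun t _ => sq_nonneg _
    have hL : 0 < v - u := by linarith
    rcases eq_or_lt_of_le hMnn with hM0 | hMpos
    · rw [← hM0]
      have := mul_nonneg (le_of_lt hL) hM2nn
      linarith [this]
    · have hpt : ∀ t ∈ Icc u v,
          2*((∫ s in u..v, |f s|)/(v-u))*|f t| ≤ ((∫ s in u..v, |f s|)/(v-u))^2 + f t^2 := by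
        intro t _
        linarith [sq_nonneg ((∫ s in u..v, |f s|)/(v-u) - |f t|), sq_abs (f t)]
      have hmono : (∫ t in u..v, 2*((∫ s in u..v, |f s|)/(v-u))*|f t|) ≤
          ∫ t in u..v, (((∫ s in u..v, |f s|)/(v-u))^2 + f t^2) :=
        intervalIntegral.integral_mono_on (le_of_lt hlt)
          ((continuous_const.mul hf.abs).intervalIntegrable u v)
          ((continuous_const.add (hf.pow 2)).intervalIntegrable u v) hpt
      have e1 : (∫ t in u..v, 2*((∫ s in u..v, |f s|)/(v-u))*|f t|) =
          2*((∫ s in u..v, |f s|)/(v-u))*(∫ s in u..v, |f s|) := by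
        rw [intervalIntegral.integral_const_mul]
      have e2 : (∫ t in u..v, (((∫ s in u..v, |f s|)/(v-u))^2 + f t^2)) =
          ((∫ s in u..v, |f s|)/(v-u))^2*(v-u) + ∫ t in u..v, f t^2 := by
        rw [intervalIntegral.integral_add (f := fun _ => ((∫ s in u..v, |f s|)/(v-u))^2)
          (g := fun t => f t ^ 2) intervalIntegrable_const
          ((hf.pow 2).intervalIntegrable u v),
          intervalIntegral.integral_const, smul_eq_mul]
        ring
      rw [e1, e2] at hmono
      have e3 : ((∫ s in u..v, |f s|)/(v-u))^2*(v-u) = (∫ s in u..v, |f s|)^2/(v-u) := by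
        field_simp
      have e4 : 2*((∫ s in u..v, |f s|)/(v-u))*(∫ s in u..v, |f s|) =
          2*((∫ s in u..v, |f s|)^2/(v-u)) := by ring
      rw [e3, e4] at hmono
      have h5 : (∫ s in u..v, |f s|)^2/(v-u) ≤ ∫ t in u..v, f t^2 := by linarith
      calc (∫ t in u..v, |f t|)^2 = ((∫ s in u..v, |f s|)^2/(v-u))*(v-u) := by
            field_simp
        _ ≤ (∫ t in u..v, f t^2)*(v-u) := mul_le_mul_of_nonneg_right h5 (le_of_lt hL)
        _ = (v-u)*∫ t in u..v, f t^2 := mul_comm _ _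

set_option maxHeartbeats 2000000 in
/-- **Lemma 3.1.** There is an absolute constant `C > 0`, independent
of the partition, the mesh size `h`, the interface position `α`, of `γ`, and of `p`,
such that the broken `H¹` seminorm over `(a,α)` of `Ī_h p - I_h p` is bounded by
`C h (‖p₁''‖_{L²(a,b)} + ‖p₂''‖_{L²(a,b)})`.  Here `π_h` (nodal piecewise-linear
interpolation) is characterized by its nodal values and by being affine on each
element; `P = π_h p`, `P₁ = π_h p₁`, `P₂ = π_h p₂`, `Q = π_h (p₂' - p₁')`. -/
theorem lemma_3_1_left_interpolation_estimate :
    ∃ C : ℝ, 0 < C ∧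
      ∀ (a b : ℝ) (n : ℕ) (x : ℕ → ℝ) (k : ℕ) (α γ h : ℝ)
        (p₁ p₂ P P₁ P₂ Q : ℝ → ℝ),
        a < b → x 0 = a → x n = b →
        (∀ i, i < n → x i < x (i + 1)) →
        (∀ i, i < n → x (i + 1) - x i ≤ h) → h ≤ 1 →
        k + 1 ≤ n → x k < α → α < x (k + 1) →
        α - x (k + 1) - γ ≠ 0 →
        ContDiff ℝ 2 p₁ → ContDiff ℝ 2 p₂ →
        -- nodal interpolation values (p = p₁ on [a,α), p = p₂ on (α,b])
        (∀ i, i ≤ n → P (x i) = if x i < α then p₁ (x i) else p₂ (x i)) →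
        (∀ i, i ≤ n → P₁ (x i) = p₁ (x i)) →
        (∀ i, i ≤ n → P₂ (x i) = p₂ (x i)) →
        (∀ i, i ≤ n → Q (x i) = deriv p₂ (x i) - deriv p₁ (x i)) →
        -- affine on each element
        (∀ i, i < n → ∃ c d : ℝ, ∀ t ∈ Icc (x i) (x (i + 1)), P t = c * t + d) →
        (∀ i, i < n → ∃ c d : ℝ, ∀ t ∈ Icc (x i) (x (i + 1)), P₁ t = c * t + d) →
        (∀ i, i < n → ∃ c d : ℝ, ∀ t ∈ Icc (x i) (x (i + 1)), P₂ t = c * t + d) →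
        (∀ i, i < n → ∃ c d : ℝ, ∀ t ∈ Icc (x i) (x (i + 1)), Q t = c * t + d) →
        (let m₁ : ℝ := (α - x (k + 1)) / (x (k + 1) - x k)
         let m₂ : ℝ := (α - x k - γ) * (α - x (k + 1)) /
            ((x (k + 1) - x k) * (α - x (k + 1) - γ))
         let ψ : ℝ → ℝ := fun t =>
            if t < x k then 0 else if t < α then m₁ * (t - x k)
            else if t ≤ x (k + 1) then m₂ * (t - x (k + 1)) else 0
         let δ : ℝ := -(p₂ α - p₁ α) / (α - x (k + 1))
         -- the enriched interpolant  I_h p = π_h p + (π_h(p₂'-p₁'))ψ + δψ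
         let Ih : ℝ → ℝ := fun t => P t + (Q t + δ) * ψ t
         -- the broken interpolant  Ī_h p
         let Ibar : ℝ → ℝ := fun t => if t < α then P₁ t else P₂ t
         (∫ t in a..α, (deriv (fun s => Ibar s - Ih s) t) ^ 2) ^ ((1 : ℝ) / 2) ≤
           C * h * ((∫ t in a..b, (deriv (deriv p₁) t) ^ 2) ^ ((1 : ℝ) / 2) +
             (∫ t in a..b, (deriv (deriv p₂) t) ^ 2) ^ ((1 : ℝ) / 2))) := by
  refine ⟨5, by norm_num, ?_⟩
  intro a b n x k α γ h p₁ p₂ P P₁ P₂ Q hab hx0 hxn hxlt hxh hh1 hkn hkα hαk1 hγ hp₁c2 hp₂c2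
    hPv hP₁v hP₂v hQv hPaff hP₁aff hP₂aff hQaff
  intro m₁ m₂ ψ δ Ih Ibar
  have hm₁def : m₁ = (α - x (k + 1)) / (x (k + 1) - x k) := rfl
  have hψdef : ψ = fun t =>
      if t < x k then (0:ℝ) else if t < α then m₁ * (t - x k)
      else if t ≤ x (k + 1) then m₂ * (t - x (k + 1)) else 0 := rfl
  have hδdef : δ = -(p₂ α - p₁ α) / (α - x (k + 1)) := rfl
  have hIhdef : Ih = fun t => P t + (Q t + δ) * ψ t := rfl
  have hIbardef : Ibar = fun t => if t < α then P₁ t else P₂ t := rfl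
  -- basic facts about the partition
  have hkn' : k < n := by omega
  have hkk1 : x k < x (k+1) := hxlt k hkn'
  have hk0 : (0:ℝ) < x (k+1) - x k := by linarith
  have hmono : ∀ i j, i ≤ j → j ≤ n → x i ≤ x j := by
    intro i j
    induction j with
    | zero =>
      intro hij _
      have : i = 0 := by omega
      simp [this]
    | succ m ih =>
      intro hij hjn
      rcases Nat.lt_or_ge i (m+1) with hlt | hge
      · have h1 : x i ≤ x m := ih (by omega) (by omega)
        have h2 : x m < x (m+1) := hxlt m (by omega)
        linarith
      · have : i = m+1 := by omega
        simp [this]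
  have hax : a ≤ x k := by rw [← hx0]; exact hmono 0 k (by omega) (by omega)
  have hxb : x (k+1) ≤ b := by rw [← hxn]; exact hmono (k+1) n hkn le_rfl
  have haα : a < α := lt_of_le_of_lt hax hkα
  have hh : x (k+1) - x k ≤ h := hxh k hkn'
  have hhpos : 0 < h := lt_of_lt_of_le hk0 hh
  -- smoothness
  obtain ⟨hp₁d, hp₁'d, hp₁''c⟩ := aux_smooth p₁ hp₁c2
  obtain ⟨hp₂d, hp₂'d, hp₂''c⟩ := aux_smooth p₂ hp₂c2
  obtain ⟨G1, hG1def⟩ : ∃ g : ℝ → ℝ, g = fun t => deriv p₂ t - deriv p₁ t := ⟨_, rfl⟩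
  obtain ⟨G2, hG2def⟩ : ∃ g : ℝ → ℝ, g = fun t => deriv (deriv p₂) t - deriv (deriv p₁) t :=
    ⟨_, rfl⟩
  have hG1app : ∀ t, G1 t = deriv p₂ t - deriv p₁ t := fun t => by rw [hG1def]
  have hG2app : ∀ t, G2 t = deriv (deriv p₂) t - deriv (deriv p₁) t := fun t => by rw [hG2def]
  have hG1c : Continuous G1 := by
    rw [hG1def]; exact hp₂'d.continuous.sub hp₁'d.continuous
  have hG2c : Continuous G2 := by
    rw [hG2def]; exact hp₂''c.sub hp₁''c
  have hG1deriv : ∀ t, HasDerivAt G1 (G2 t) t := by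
    intro t
    rw [hG1def, hG2app t]
    exact ((hp₂'d t).hasDerivAt).sub ((hp₁'d t).hasDerivAt)
  have hFTC2 : ∀ u v : ℝ, (∫ w in u..v, G2 w) = G1 v - G1 u := fun u v =>
    intervalIntegral.integral_eq_sub_of_hasDerivAt (fun t _ => hG1deriv t)
      (hG2c.intervalIntegrable u v)
  have hFTC1 : (∫ u in α..x (k+1), G1 u) =
      (p₂ (x (k+1)) - p₁ (x (k+1))) - (p₂ α - p₁ α) := by
    have hder : ∀ t ∈ uIcc α (x (k+1)), HasDerivAt (fun y => p₂ y - p₁ y) (G1 t) t := by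
      intro t _
      rw [hG1app t]
      exact ((hp₂d t).hasDerivAt).sub ((hp₁d t).hasDerivAt)
    simpa using intervalIntegral.integral_eq_sub_of_hasDerivAt hder
      (hG1c.intervalIntegrable _ _)
  -- P and P₁ agree on [x 0, x k]
  have hPP1 : ∀ t, x 0 ≤ t → t ≤ x k → P t = P₁ t := by
    intro t h0 hk'
    rcases Nat.eq_zero_or_pos k with hk00 | hk00
    · have ht : t = x 0 := by
        have : x k = x 0 := by rw [hk00]
        exact le_antisymm (this ▸ hk') h0
      rw [ht, hPv 0 (by omega), hP₁v 0 (by omega), if_pos (by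
        have := hmono 0 k (by omega) (by omega); linarith)]
    · obtain ⟨i, hik, h1, h2⟩ := aux_exists_elem x k hk00 t h0 hk'
      have hin : i < n := by omega
      obtain ⟨c, d, hc⟩ := hPaff i hin
      obtain ⟨c', d', hc'⟩ := hP₁aff i hin
      have hxi : x i < x (i+1) := hxlt i hin
      have hiα : x i < α := lt_of_le_of_lt (hmono i k (by omega) (by omega)) hkα
      have hi1α : x (i+1) < α := lt_of_le_of_lt (hmono (i+1) k (by omega) (by omega)) hkα
      have e1 : c * x i + d = c' * x i + d' := by
        rw [← hc (x i) ⟨le_rfl, le_of_lt hxi⟩, ← hc' (x i) ⟨le_rfl, le_of_lt hxi⟩,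
          hPv i (by omega), hP₁v i (by omega), if_pos hiα]
      have e2 : c * x (i+1) + d = c' * x (i+1) + d' := by
        rw [← hc (x (i+1)) ⟨le_of_lt hxi, le_rfl⟩, ← hc' (x (i+1)) ⟨le_of_lt hxi, le_rfl⟩,
          hPv (i+1) (by omega), hP₁v (i+1) (by omega), if_pos hi1α]
      rw [hc t ⟨h1, h2⟩, hc' t ⟨h1, h2⟩]
      exact aux_affine_eq c d c' d' (x i) (x (i+1)) t (ne_of_lt hxi) e1 e2
  -- element k coefficients
  obtain ⟨cP, dP, hP⟩ := hPaff k hkn'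
  obtain ⟨cP1, dP1, hP1⟩ := hP₁aff k hkn'
  obtain ⟨cQ, dQ, hQ⟩ := hQaff k hkn'
  have hPk : cP * x k + dP = p₁ (x k) := by
    rw [← hP (x k) ⟨le_rfl, le_of_lt hkk1⟩, hPv k (by omega), if_pos hkα]
  have hPk1 : cP * x (k+1) + dP = p₂ (x (k+1)) := by
    rw [← hP (x (k+1)) ⟨le_of_lt hkk1, le_rfl⟩, hPv (k+1) (by omega),
      if_neg (not_lt.mpr (le_of_lt hαk1))]
  have hP1k : cP1 * x k + dP1 = p₁ (x k) := by
    rw [← hP1 (x k) ⟨le_rfl, le_of_lt hkk1⟩, hP₁v k (by omega)]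
  have hP1k1 : cP1 * x (k+1) + dP1 = p₁ (x (k+1)) := by
    rw [← hP1 (x (k+1)) ⟨le_of_lt hkk1, le_rfl⟩, hP₁v (k+1) (by omega)]
  have hQk : cQ * x k + dQ = G1 (x k) := by
    rw [hG1app, ← hQv k (by omega), hQ (x k) ⟨le_rfl, le_of_lt hkk1⟩]
  have hQk1 : cQ * x (k+1) + dQ = G1 (x (k+1)) := by
    rw [hG1app, ← hQv (k+1) (by omega), hQ (x (k+1)) ⟨le_of_lt hkk1, le_rfl⟩]
  have hcP : (cP1 - cP) * (x (k+1) - x k) = p₁ (x (k+1)) - p₂ (x (k+1)) := by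
    linear_combination hP1k1 - hPk1 - hP1k + hPk
  have hcQ : cQ * (x (k+1) - x k) = G1 (x (k+1)) - G1 (x k) := by
    linear_combination hQk1 - hQk
  have hm₁eq : m₁ * (x (k+1) - x k) = α - x (k+1) := by
    rw [hm₁def]; field_simp
  have hαxne : α - x (k+1) ≠ 0 := sub_ne_zero_of_ne (ne_of_lt hαk1)
  have hδeq : δ * (α - x (k+1)) = -(p₂ α - p₁ α) := by
    rw [hδdef]
    field_simp
  -- the explicit derivative on (x k, α)
  obtain ⟨A, hAdef⟩ : ∃ A : ℝ, A = cP1 - cP - m₁ * G1 (x k) - m₁ * δ := ⟨_, rfl⟩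
  obtain ⟨Draw, hDrawdef⟩ : ∃ D : ℝ → ℝ, D = fun t => A - 2*m₁*cQ*(t - x k) := ⟨_, rfl⟩
  obtain ⟨Dfun, hDfundef⟩ : ∃ F : ℝ → ℝ, F = fun t => if t ≤ x k then 0 else Draw t := ⟨_, rfl⟩
  have hDrawc : Continuous Draw := by
    rw [hDrawdef]
    exact continuous_const.sub (continuous_const.mul (continuous_id.sub continuous_const))
  have hDrawapp : ∀ t, Draw t = A - 2*m₁*cQ*(t - x k) := fun t => by rw [hDrawdef]
  -- basic integral bounds
  have hMnn : 0 ≤ ∫ t in x k..x (k+1), |G2 t| :=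
    intervalIntegral.integral_nonneg (le_of_lt hkk1) fun t _ => abs_nonneg _
  have key2 : ∀ u, x k ≤ u → u ≤ x (k+1) →
      |G1 u - G1 (x k)| ≤ ∫ t in x k..x (k+1), |G2 t| := by
    intro u h1 h2
    rw [← hFTC2 (x k) u]
    have i1 : |∫ w in x k..u, G2 w| ≤ ∫ w in x k..u, |G2 w| :=
      intervalIntegral.abs_integral_le_integral_abs h1
    have i2 : (∫ w in x k..u, |G2 w|) + ∫ w in u..x (k+1), |G2 w| =
        ∫ w in x k..x (k+1), |G2 w| :=
      intervalIntegral.integral_add_adjacent_intervals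
        (hG2c.abs.intervalIntegrable _ _) (hG2c.abs.intervalIntegrable _ _)
    have i3 : 0 ≤ ∫ w in u..x (k+1), |G2 w| :=
      intervalIntegral.integral_nonneg h2 fun w _ => abs_nonneg _
    linarith
  have hIval : (∫ u in α..x (k+1), (G1 u - G1 (x k))) =
      (p₂ (x (k+1)) - p₁ (x (k+1))) - (p₂ α - p₁ α) - G1 (x k) * (x (k+1) - α) := by
    rw [intervalIntegral.integral_sub (hG1c.intervalIntegrable _ _) intervalIntegrable_const,
      hFTC1, intervalIntegral.integral_const, smul_eq_mul]
    ring
  have hAeq : A * (x (k+1) - x k) = -(∫ u in α..x (k+1), (G1 u - G1 (x k))) := by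
    rw [hIval, hAdef]
    linear_combination hcP - G1 (x k) * hm₁eq - δ * hm₁eq - hδeq
  have hAint : |∫ u in α..x (k+1), (G1 u - G1 (x k))| ≤
      (∫ t in x k..x (k+1), |G2 t|) * |x (k+1) - α| := by
    have hb : ∀ u ∈ Set.uIoc α (x (k+1)), ‖G1 u - G1 (x k)‖ ≤ ∫ t in x k..x (k+1), |G2 t| := by
      intro u hu
      rw [Set.uIoc_of_le (le_of_lt hαk1)] at hu
      rw [Real.norm_eq_abs]
      exact key2 u (le_of_lt (lt_trans hkα hu.1)) hu.2
    simpa [Real.norm_eq_abs] using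
      intervalIntegral.norm_integral_le_of_norm_le_const hb
  have hAabs : |A| ≤ ∫ t in x k..x (k+1), |G2 t| := by
    have h2' : |A * (x (k+1) - x k)| ≤ (∫ t in x k..x (k+1), |G2 t|) * (x (k+1) - x k) := by
      rw [hAeq, abs_neg]
      refine hAint.trans ?_
      rw [abs_of_pos (by linarith : (0:ℝ) < x (k+1) - α)]
      exact mul_le_mul_of_nonneg_left (by linarith) hMnn
    have h3' : |A| * (x (k+1) - x k) = |A * (x (k+1) - x k)| := by
      rw [abs_mul, abs_of_pos hk0]
    exact le_of_mul_le_mul_right (by linarith) hk0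
  have hm₁abs : |m₁| ≤ 1 := by
    have h1 : |m₁| * (x (k+1) - x k) = x (k+1) - α := by
      rw [← abs_of_pos hk0, ← abs_mul, hm₁eq, abs_of_neg (by linarith : α - x (k+1) < 0)]
      ring
    have h2 : |m₁| * (x (k+1) - x k) ≤ 1 * (x (k+1) - x k) := by rw [h1]; linarith
    exact le_of_mul_le_mul_right h2 hk0
  have hcQM : |cQ| * (x (k+1) - x k) ≤ ∫ t in x k..x (k+1), |G2 t| := by
    have h1 : |cQ * (x (k+1) - x k)| ≤ ∫ t in x k..x (k+1), |G2 t| := by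
      rw [hcQ]; exact key2 (x (k+1)) (le_of_lt hkk1) le_rfl
    rwa [abs_mul, abs_of_pos hk0] at h1
  have hptw : ∀ t ∈ Icc (x k) α, |Draw t| ≤ 3 * ∫ t in x k..x (k+1), |G2 t| := by
    intro t ht
    have e2 : |cQ * (t - x k)| ≤ ∫ t in x k..x (k+1), |G2 t| := by
      rw [abs_mul, abs_of_nonneg (sub_nonneg.mpr ht.1)]
      calc |cQ| * (t - x k) ≤ |cQ| * (x (k+1) - x k) :=
            mul_le_mul_of_nonneg_left (by linarith [ht.2]) (abs_nonneg cQ)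
        _ ≤ _ := hcQM
    have e3 : |2*m₁*cQ*(t - x k)| = 2 * |m₁| * |cQ * (t - x k)| := by
      rw [show 2*m₁*cQ*(t - x k) = (2*m₁)*(cQ*(t - x k)) by ring, abs_mul, abs_mul, abs_two]
    rw [hDrawapp t]
    calc |A - 2*m₁*cQ*(t - x k)| ≤ |A| + |2*m₁*cQ*(t - x k)| := abs_sub A (2*m₁*cQ*(t - x k))
      _ ≤ 3 * ∫ t in x k..x (k+1), |G2 t| := by
          rw [e3]
          have u1 : |m₁| * |cQ * (t - x k)| ≤ 1 * |cQ * (t - x k)| :=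
            mul_le_mul_of_nonneg_right hm₁abs (abs_nonneg _)
          linarith [hAabs, e2, u1, abs_nonneg (cQ*(t - x k))]
  -- derivative of the difference
  have hF0 : ∀ t ∈ Ioo a (x k), deriv (fun s => Ibar s - Ih s) t = 0 := by
    intro t ht
    have hev : (fun s => Ibar s - Ih s) =ᶠ[nhds t] fun _ => (0:ℝ) := by
      refine Filter.eventuallyEq_of_mem (Ioo_mem_nhds ht.1 ht.2) ?_
      intro s hs
      have hsα : s < α := lt_trans hs.2 hkα
      have hP0 : P s = P₁ s := hPP1 s (by rw [hx0]; exact le_of_lt hs.1) (le_of_lt hs.2)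
      simp only [hIbardef, hIhdef, hψdef]
      rw [if_pos hsα, if_pos hs.2, hP0]
      ring
    rw [hev.deriv_eq]
    exact deriv_const t 0
  have hFD : ∀ t ∈ Ioo (x k) α, deriv (fun s => Ibar s - Ih s) t = Draw t := by
    intro t ht
    have hev : (fun s => Ibar s - Ih s) =ᶠ[nhds t]
        (fun s => cP1*s + dP1 - (cP*s + dP + (cQ*s + dQ + δ) * (m₁ * (s - x k)))) := by
      refine Filter.eventuallyEq_of_mem (Ioo_mem_nhds ht.1 ht.2) ?_
      intro s hs
      have hs1 : x k < s := hs.1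
      have hs2 : s < α := hs.2
      have hsIcc : s ∈ Icc (x k) (x (k+1)) := ⟨le_of_lt hs1, le_of_lt (lt_trans hs2 hαk1)⟩
      simp only [hIbardef, hIhdef, hψdef]
      rw [if_pos hs2, if_neg (not_lt.mpr (le_of_lt hs1)), if_pos hs2,
        hP1 s hsIcc, hP s hsIcc, hQ s hsIcc]
    rw [hev.deriv_eq]
    have hd1 : HasDerivAt (fun s : ℝ => cP1 * s + dP1) cP1 t := by
      simpa using ((hasDerivAt_id t).const_mul cP1).add_const dP1
    have hd2 : HasDerivAt (fun s : ℝ => cP * s + dP) cP t := by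
      simpa using ((hasDerivAt_id t).const_mul cP).add_const dP
    have hd3 : HasDerivAt (fun s : ℝ => cQ * s + dQ + δ) cQ t := by
      simpa using (((hasDerivAt_id t).const_mul cQ).add_const dQ).add_const δ
    have hd4 : HasDerivAt (fun s : ℝ => m₁ * (s - x k)) m₁ t := by
      simpa using ((hasDerivAt_id t).sub_const (x k)).const_mul m₁
    have hd : HasDerivAt
        (fun s => cP1*s + dP1 - (cP*s + dP + (cQ*s + dQ + δ) * (m₁ * (s - x k))))
        (cP1 - (cP + (cQ * (m₁ * (t - x k)) + (cQ*t + dQ + δ) * m₁))) t :=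
      hd1.sub (hd2.add (hd3.mul hd4))
    rw [hd.deriv, hDrawapp t, hAdef]
    linear_combination (-m₁) * hQk
  -- a.e. identification of the integrand
  have hne : ∀ c : ℝ, ∀ᵐ t : ℝ, t ≠ c := by
    intro c
    have hset : {t : ℝ | ¬ t ≠ c} = {c} := by ext t; simp
    rw [MeasureTheory.ae_iff, hset]
    exact MeasureTheory.measure_singleton c
  have hae : ∀ᵐ t : ℝ, t ∈ Set.uIoc a α →
      deriv (fun s => Ibar s - Ih s) t ^ 2 = Dfun t ^ 2 := by
    filter_upwards [hne (x k), hne α] with t ht1 ht2 htm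
    rw [Set.uIoc_of_le (le_of_lt haα)] at htm
    rcases lt_or_gt_of_ne ht1 with hlt | hgt
    · rw [hF0 t ⟨htm.1, hlt⟩]
      simp only [hDfundef]
      rw [if_pos (le_of_lt hlt)]
    · have htα : t < α := lt_of_le_of_ne htm.2 ht2
      rw [hFD t ⟨hgt, htα⟩]
      simp only [hDfundef]
      rw [if_neg (not_le.mpr hgt)]
  -- integrability
  have hInt2 : IntervalIntegrable (fun t => Dfun t ^ 2) MeasureTheory.volume (x k) α := by
    rw [intervalIntegrable_iff_integrableOn_Ioc_of_le (le_of_lt hkα)]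
    have hbase : MeasureTheory.IntegrableOn (fun t => Draw t ^ 2) (Ioc (x k) α)
        MeasureTheory.volume := by
      have h1 : IntervalIntegrable (fun t => Draw t ^ 2) MeasureTheory.volume (x k) α :=
        (hDrawc.pow 2).intervalIntegrable (x k) α
      rwa [intervalIntegrable_iff_integrableOn_Ioc_of_le (le_of_lt hkα)] at h1
    refine hbase.congr_fun ?_ measurableSet_Ioc
    intro t ht
    simp only [hDfundef]
    rw [if_neg (not_le.mpr ht.1)]
  have hInt1 : IntervalIntegrable (fun t => Dfun t ^ 2) MeasureTheory.volume a (x k) := by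
    rw [intervalIntegrable_iff_integrableOn_Ioc_of_le hax]
    refine (MeasureTheory.integrableOn_zero).congr_fun ?_ measurableSet_Ioc
    intro t ht
    simp only [hDfundef]
    rw [if_pos ht.2]
    norm_num
  have hzero : (∫ t in a..x k, Dfun t ^ 2) = 0 := by
    have heq : EqOn (fun t => Dfun t ^ 2) (fun _ => (0:ℝ)) (uIcc a (x k)) := by
      intro t ht
      rw [uIcc_of_le hax] at ht
      simp only [hDfundef]
      rw [if_pos ht.2]
      norm_num
    rw [intervalIntegral.integral_congr heq]
    simp
  have hmain : (∫ t in x k..α, Dfun t ^ 2) = ∫ t in x k..α, Draw t ^ 2 := by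
    refine intervalIntegral.integral_congr_ae (MeasureTheory.ae_of_all _ ?_)
    intro t ht
    rw [Set.uIoc_of_le (le_of_lt hkα)] at ht
    simp only [hDfundef]
    rw [if_neg (not_le.mpr ht.1)]
  have hXeq : (∫ t in a..α, deriv (fun s => Ibar s - Ih s) t ^ 2) =
      ∫ t in x k..α, Draw t ^ 2 := by
    rw [intervalIntegral.integral_congr_ae
      (f := fun t => deriv (fun s => Ibar s - Ih s) t ^ 2) (g := fun t => Dfun t ^ 2) hae,
      ← intervalIntegral.integral_add_adjacent_intervals hInt1 hInt2, hzero, zero_add, hmain]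
  -- bound the integral
  have hbound : (∫ t in x k..α, Draw t ^ 2) ≤
      (α - x k) * (9 * (∫ t in x k..x (k+1), |G2 t|) ^ 2) := by
    have hpt : ∀ t ∈ Icc (x k) α,
        Draw t ^ 2 ≤ 9 * (∫ t in x k..x (k+1), |G2 t|) ^ 2 := by
      intro t ht
      have h1 := hptw t ht
      have h2 : Draw t ^ 2 ≤ (3 * ∫ t in x k..x (k+1), |G2 t|) ^ 2 :=
        sq_le_sq' (by linarith [neg_abs_le (Draw t)]) (le_trans (le_abs_self _) h1)
      have h3 : (3 * ∫ t in x k..x (k+1), |G2 t|) ^ 2 =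
          9 * (∫ t in x k..x (k+1), |G2 t|) ^ 2 := by ring
      linarith [h2, h3.le, h3.ge]
    have hi1 : IntervalIntegrable (fun t => Draw t ^ 2) MeasureTheory.volume (x k) α :=
      (hDrawc.pow 2).intervalIntegrable (x k) α
    have hi2 : IntervalIntegrable (fun _ => 9 * (∫ t in x k..x (k+1), |G2 t|) ^ 2)
        MeasureTheory.volume (x k) α := _root_.intervalIntegrable_const
    have hm := intervalIntegral.integral_mono_on (le_of_lt hkα) hi1 hi2 hpt
    rwa [intervalIntegral.integral_const, smul_eq_mul] at hm
  -- Cauchy-Schwarz and global bound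
  have hCS : (∫ t in x k..x (k+1), |G2 t|) ^ 2 ≤
      (x (k+1) - x k) * ∫ t in x k..x (k+1), G2 t ^ 2 :=
    aux_cs _ _ G2 (le_of_lt hkk1) hG2c
  have hM2nn : 0 ≤ ∫ t in x k..x (k+1), G2 t ^ 2 :=
    intervalIntegral.integral_nonneg (le_of_lt hkk1) fun t _ => sq_nonneg _
  have hs1 : (∫ t in a..x k, G2 t ^ 2) + (∫ t in x k..x (k+1), G2 t ^ 2) =
      ∫ t in a..x (k+1), G2 t ^ 2 :=
    intervalIntegral.integral_add_adjacent_intervals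
      ((hG2c.pow 2).intervalIntegrable _ _) ((hG2c.pow 2).intervalIntegrable _ _)
  have hs2 : (∫ t in a..x (k+1), G2 t ^ 2) + (∫ t in x (k+1)..b, G2 t ^ 2) =
      ∫ t in a..b, G2 t ^ 2 :=
    intervalIntegral.integral_add_adjacent_intervals
      ((hG2c.pow 2).intervalIntegrable _ _) ((hG2c.pow 2).intervalIntegrable _ _)
  have hn1 : 0 ≤ ∫ t in a..x k, G2 t ^ 2 :=
    intervalIntegral.integral_nonneg hax fun t _ => sq_nonneg _
  have hn2 : 0 ≤ ∫ t in x (k+1)..b, G2 t ^ 2 :=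
    intervalIntegral.integral_nonneg hxb fun t _ => sq_nonneg _
  have hM2b : (∫ t in x k..x (k+1), G2 t ^ 2) ≤ ∫ t in a..b, G2 t ^ 2 := by linarith
  set I1 := ∫ t in a..b, deriv (deriv p₁) t ^ 2 with hI1def
  set I2 := ∫ t in a..b, deriv (deriv p₂) t ^ 2 with hI2def
  have h2I : (∫ t in a..b, G2 t ^ 2) ≤ 2 * I1 + 2 * I2 := by
    have hpt : ∀ t ∈ Icc a b,
        G2 t ^ 2 ≤ 2 * deriv (deriv p₁) t ^ 2 + 2 * deriv (deriv p₂) t ^ 2 := by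
      intro t _
      rw [hG2app t]
      linarith [sq_nonneg (deriv (deriv p₁) t + deriv (deriv p₂) t)]
    have hm : (∫ t in a..b, G2 t ^ 2) ≤
        ∫ t in a..b, (2 * deriv (deriv p₁) t ^ 2 + 2 * deriv (deriv p₂) t ^ 2) :=
      intervalIntegral.integral_mono_on (le_of_lt hab)
        ((hG2c.pow 2).intervalIntegrable _ _)
        (((continuous_const.mul (hp₁''c.pow 2)).add
          (continuous_const.mul (hp₂''c.pow 2))).intervalIntegrable _ _) hpt
    have he : (∫ t in a..b, (2 * deriv (deriv p₁) t ^ 2 + 2 * deriv (deriv p₂) t ^ 2)) =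
        2 * I1 + 2 * I2 := by
      rw [intervalIntegral.integral_add (f := fun t => 2 * deriv (deriv p₁) t ^ 2)
        (g := fun t => 2 * deriv (deriv p₂) t ^ 2)
        ((continuous_const.mul (hp₁''c.pow 2)).intervalIntegrable _ _)
        ((continuous_const.mul (hp₂''c.pow 2)).intervalIntegrable _ _),
        intervalIntegral.integral_const_mul, intervalIntegral.integral_const_mul,
        hI1def, hI2def]
    linarith [hm, he.le, he.ge]
  have hI1nn : 0 ≤ I1 := by
    rw [hI1def]; exact intervalIntegral.integral_nonneg (le_of_lt hab) fun t _ => sq_nonneg _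
  have hI2nn : 0 ≤ I2 := by
    rw [hI2def]; exact intervalIntegral.integral_nonneg (le_of_lt hab) fun t _ => sq_nonneg _
  set N1 := I1 ^ ((1:ℝ)/2) with hN1def
  set N2 := I2 ^ ((1:ℝ)/2) with hN2def
  have hN1nn : 0 ≤ N1 := Real.rpow_nonneg hI1nn _
  have hN2nn : 0 ≤ N2 := Real.rpow_nonneg hI2nn _
  have hN1sq : N1 ^ 2 = I1 := by
    rw [hN1def, ← Real.rpow_natCast (I1 ^ ((1:ℝ)/2)) 2, ← Real.rpow_mul hI1nn]
    norm_num
  have hN2sq : N2 ^ 2 = I2 := by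
    rw [hN2def, ← Real.rpow_natCast (I2 ^ ((1:ℝ)/2)) 2, ← Real.rpow_mul hI2nn]
    norm_num
  -- final assembly
  have hXb : (∫ t in a..α, deriv (fun s => Ibar s - Ih s) t ^ 2) ≤ (5*h*(N1+N2))^2 := by
    rw [hXeq]
    have c1 : (α - x k) * (9 * (∫ t in x k..x (k+1), |G2 t|) ^ 2) ≤
        (x (k+1) - x k) * (9 * (∫ t in x k..x (k+1), |G2 t|) ^ 2) :=
      mul_le_mul_of_nonneg_right (by linarith) (by positivity)
    have c2 : (x (k+1) - x k) * (9 * (∫ t in x k..x (k+1), |G2 t|) ^ 2) ≤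
        (x (k+1) - x k) * (9 * ((x (k+1) - x k) * ∫ t in x k..x (k+1), G2 t ^ 2)) :=
      mul_le_mul_of_nonneg_left (by linarith [hCS]) (le_of_lt hk0)
    have c3 : (x (k+1) - x k) * (9 * ((x (k+1) - x k) * ∫ t in x k..x (k+1), G2 t ^ 2)) =
        9 * (x (k+1) - x k)^2 * ∫ t in x k..x (k+1), G2 t ^ 2 := by ring
    have c4 : 9 * (x (k+1) - x k)^2 * (∫ t in x k..x (k+1), G2 t ^ 2) ≤
        9 * h^2 * ∫ t in x k..x (k+1), G2 t ^ 2 := by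
      have hsq : (x (k+1) - x k)^2 ≤ h^2 := pow_le_pow_left₀ (le_of_lt hk0) hh 2
      exact mul_le_mul_of_nonneg_right (by linarith) hM2nn
    have c5 : 9 * h^2 * (∫ t in x k..x (k+1), G2 t ^ 2) ≤ 9 * h^2 * (2*I1 + 2*I2) := by
      have h9 : (0:ℝ) ≤ 9 * h^2 := by positivity
      exact mul_le_mul_of_nonneg_left (by linarith [hM2b, h2I]) h9
    have c6 : 9 * h^2 * (2*I1 + 2*I2) ≤ (5*h*(N1+N2))^2 := by
      rw [← hN1sq, ← hN2sq]
      linarith [sq_nonneg (h*N1), sq_nonneg (h*N2),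
        mul_nonneg (mul_nonneg (sq_nonneg h) hN1nn) hN2nn]
    calc (∫ t in x k..α, Draw t ^ 2)
        ≤ (α - x k) * (9 * (∫ t in x k..x (k+1), |G2 t|) ^ 2) := hbound
      _ ≤ (5*h*(N1+N2))^2 := by linarith [c1, c2, c3.le, c3.ge, c4, c5, c6]
  have hXnn : 0 ≤ ∫ t in a..α, deriv (fun s => Ibar s - Ih s) t ^ 2 :=
    intervalIntegral.integral_nonneg (le_of_lt haα) fun u _ => sq_nonneg _
  have hYnn : 0 ≤ 5*h*(N1+N2) :=
    mul_nonneg (mul_nonneg (by norm_num) (le_of_lt hhpos)) (add_nonneg hN1nn hN2nn)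
  calc (∫ t in a..α, deriv (fun s => Ibar s - Ih s) t ^ 2) ^ ((1:ℝ)/2)
      ≤ ((5*h*(N1+N2))^2) ^ ((1:ℝ)/2) := Real.rpow_le_rpow hXnn hXb (by norm_num)
    _ = 5*h*(N1+N2) := by
        rw [← Real.rpow_natCast (5*h*(N1+N2)) 2, ← Real.rpow_mul hYnn]
        norm_num
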